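/- Let j > 0, k > 0, ℓ ≥ 0, μ_h, μ_ℓ, G, ρ ∈ ℝ, and π₁, π₂, π₃ ≥ 0 with π₁ + π₂ + π₃ = 1. Set Q = |μ_h|·k + |μ_ℓ|·j + j·k·ℓ, assume Q > 0, and let Δt = jk/Q and p₁ = kμ_h⁺/Q, p₂ = jμ_ℓ⁺/Q, p₃ = kμ_h⁻/Q, p₄ = jμ_ℓ⁻/Q, p₅ = jkℓπ₁/Q, p₆ = jkℓπ₂/Q, p₇ = jkℓπ₃/Q. Fix (h,ℓ₀) ∈ ℝ², and set y₁ = (h+j, ℓ₀), y₂ = (h, ℓ₀+k), y₃ = (h−j, ℓ₀), y₄ = (h, ℓ₀−k), and arbitrary points y₅, y₆, y₇ ∈ ℝ². Then for every function v : ℝ² → ℝ and assuming 1 + ρΔt ≠ 0: (Σ_{m=1}^{7} p_m v(y_m) + G·Δt)/(1 + ρ·Δt) − v(h,ℓ₀) = (Δt/(1 + ρ·Δt)) · [ −ρ·v(h,ℓ₀) + μ_h⁺·(v(h+j,ℓ₀) − v(h,ℓ₀))/j − μ_h⁻·(v(h,ℓ₀) − v(h−j,ℓ₀))/j + μ_ℓ⁺·(v(h,ℓ₀+k)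 − v(h,ℓ₀))/k − μ_ℓ⁻·(v(h,ℓ₀) − v(h,ℓ₀−k))/k + ℓ·(π₁(v(y₅) − v(h,ℓ₀)) + π₂(v(y₆) − v(h,ℓ₀)) + π₃(v(y₇) − v(h,ℓ₀))) + G ], where x⁺ = max(x,0), x⁻ = max(−x,0). -/

import Mathlib

set_option maxHeartbeats 2000000


/-- Consistency of the scheme: the defect of the scheme map at `v` equals
`Δt/(1+ρΔt)` times the upwind finite-difference discretization of `ρv = 𝓛v + G`. -/
theorem scheme_consistency
    (j k ℓ μh μl G ρ : ℝ) (hj : 0 < j) (hk : 0 < k) (hℓ : 0 ≤ ℓ)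
    (π₁ π₂ π₃ : ℝ) (hπ₁ : 0 ≤ π₁) (hπ₂ : 0 ≤ π₂) (hπ₃ : 0 ≤ π₃)
    (hπsum : π₁ + π₂ + π₃ = 1)
    (hQ : 0 < |μh| * k + |μl| * j + j * k * ℓ)
    (h ℓ₀ : ℝ) (y₅ y₆ y₇ : ℝ × ℝ) (v : ℝ × ℝ → ℝ) :
    let Q : ℝ := |μh| * k + |μl| * j + j * k * ℓ
    let Δt : ℝ := j * k / Q
    let p₁ : ℝ := k * max μh 0 / Q
    let p₂ : ℝ := j * max μl 0 / Q
    let p₃ : ℝ := k * max (-μh) 0 / Q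
    let p₄ : ℝ := j * max (-μl) 0 / Q
    let p₅ : ℝ := j * k * ℓ * π₁ / Q
    let p₆ : ℝ := j * k * ℓ * π₂ / Q
    let p₇ : ℝ := j * k * ℓ * π₃ / Q
    1 + ρ * Δt ≠ 0 →
    (p₁ * v (h + j, ℓ₀) + p₂ * v (h, ℓ₀ + k) + p₃ * v (h - j, ℓ₀) + p₄ * v (h, ℓ₀ - k)
        + p₅ * v y₅ + p₆ * v y₆ + p₇ * v y₇ + G * Δt) / (1 + ρ * Δt) - v (h, ℓ₀)
      = (Δt / (1 + ρ * Δt)) *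
        (-(ρ * v (h, ℓ₀))
          + max μh 0 * (v (h + j, ℓ₀) - v (h, ℓ₀)) / j
          - max (-μh) 0 * (v (h, ℓ₀) - v (h - j, ℓ₀)) / j
          + max μl 0 * (v (h, ℓ₀ + k) - v (h, ℓ₀)) / k
          - max (-μl) 0 * (v (h, ℓ₀) - v (h, ℓ₀ - k)) / k
          + ℓ * (π₁ * (v y₅ - v (h, ℓ₀)) + π₂ * (v y₆ - v (h, ℓ₀))
              + π₃ * (v y₇ - v (h, ℓ₀)))
          + G) := by
  intro Q Δt p₁ p₂ p₃ p₄ p₅ p₆ p₇ hden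
  have hπ3 : π₃ = 1 - π₁ - π₂ := by linarith
  subst hπ3
  simp only [Q, Δt, p₁, p₂, p₃, p₄, p₅, p₆, p₇] at *
  rw [← max_zero_add_max_neg_zero_eq_abs_self μh,
      ← max_zero_add_max_neg_zero_eq_abs_self μl] at *
  generalize max μh 0 = a at *
  generalize max (-μh) 0 = b at *
  generalize max μl 0 = c at *
  generalize max (-μl) 0 = d at *
  generalize v (h + j, ℓ₀) = A at *
  generalize v (h, ℓ₀ + k) = B at *
  generalize v (h - j, ℓ₀) = C at *
  generalize v (h, ℓ₀ - k) = D at *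
  generalize v y₅ = E at *
  generalize v y₆ = F at *
  generalize v y₇ = H at *
  generalize v (h, ℓ₀) = V at *
  have hQ' : (a + b) * k + (c + d) * j + j * k * ℓ ≠ 0 := ne_of_gt hQ
  have key : 1 + ρ * (j * k / ((a + b) * k + (c + d) * j + j * k * ℓ))
      = ((a + b) * k + (c + d) * j + j * k * ℓ + ρ * (j * k))
        / ((a + b) * k + (c + d) * j + j * k * ℓ) := by
    rw [mul_div_assoc', one_add_div hQ']
  rw [key] at hden ⊢
  have hD : (a + b) * k + (c + d) * j + j * k * ℓ + ρ * (j * k) ≠ 0 := by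
    intro h0
    exact hden (by rw [h0, zero_div])
  generalize hq : (a + b) * k + (c + d) * j + j * k * ℓ = q at *
  generalize hn : q + ρ * (j * k) = n at *
  have hj' : j ≠ 0 := hj.ne'
  have hk' : k ≠ 0 := hk.ne'
  field_simp
  subst hn
  subst hq
  ring
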